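/- Let L = (e_1, …, e_N) be a list of non-negative integers with N ≥ 2 and e_1 ≥ 1. For n ≥ 1 let C_n be the number of tuples (ζ^1, …, ζ^ℓ) of proper L*-blocks whose support intervals are pairwise disjoint and partition the interval [1, n], and set C_0 = 1. Then C_k = Σ_{j=1}^{k} e_j C_{k−j} for 1 ≤ k ≤ N, and C_n = Σ_{k=1}^{N−1} e_k C_{n−k} + (1 + e_N) C_{n−N} for all n ≥ N + 1. -/

import Mathlib

open Filter Topology

namespace Zeck

-- A coefficient function is `μ : ℕ → ℕ`; index `0` is unused (members vanish there).

/-- The maximal L-block `θ^n` at index `n-1`, for `L = (e 1, …, e N)`. -/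
def maxBlock (N : ℕ) (e : ℕ → ℕ) (n : ℕ) : ℕ → ℕ :=
  fun k => if 1 ≤ k ∧ k < n then e ((n - k - 1) % N + 1) else 0

/-- A proper L-block at index `n-1` with support interval `[a, n-1]`. -/
def IsProperBlock (N : ℕ) (e : ℕ → ℕ) (ζ : ℕ → ℕ) (a n : ℕ) : Prop :=
  2 ≤ n ∧ 1 ≤ a ∧ a ≤ n - 1 ∧ (∀ j, a < j → ζ j = maxBlock N e n j) ∧
    ζ a < maxBlock N e n a ∧ (∀ j, j < a → ζ j = 0)

/-- An L-block (proper or maximal), together with its support interval. -/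
def IsBlock (N : ℕ) (e : ℕ → ℕ) (ζ : ℕ → ℕ) (I : Finset ℕ) : Prop :=
  ∃ n, 2 ≤ n ∧ ((ζ = maxBlock N e n ∧ I = Finset.Icc 1 (n - 1)) ∨
    (∃ a, IsProperBlock N e ζ a n ∧ I = Finset.Icc a (n - 1)))

/-- Membership in the periodic Zeckendorf collection for positive integers determined by L:
finite sums of L-blocks with pairwise disjoint support intervals (the zero function has `l = 0`). -/
def memColl (N : ℕ) (e : ℕ → ℕ) (μ : ℕ → ℕ) : Prop :=
  ∃ (l : ℕ) (ζ : ℕ → ℕ → ℕ) (I : ℕ → Finset ℕ),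
    (∀ i, i < l → IsBlock N e (ζ i) (I i)) ∧
    (∀ i j, i < l → j < l → i ≠ j → Disjoint (I i) (I j)) ∧
    ∀ k, μ k = ∑ i ∈ Finset.range l, ζ i k

/-- The maximal L*-block `β̄^n` at index `n`. -/
def maxStarBlock (N : ℕ) (e : ℕ → ℕ) (n : ℕ) : ℕ → ℕ :=
  fun k => if n ≤ k then e ((k - n) % N + 1) else 0

/-- A proper L*-block at index `n` with support interval `[n, b]`. -/
def IsProperStarBlock (N : ℕ) (e : ℕ → ℕ) (ζ : ℕ → ℕ) (n b : ℕ) : Prop :=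
  1 ≤ n ∧ n ≤ b ∧ (∀ j, j < b → ζ j = maxStarBlock N e n j) ∧
    ζ b < maxStarBlock N e n b ∧ (∀ j, b < j → ζ j = 0)

/-- Membership in the periodic Zeckendorf collection for `(0,1)` determined by L:
nonzero finite or infinite sums of proper L*-blocks with pairwise disjoint support intervals. -/
def memStar (N : ℕ) (e : ℕ → ℕ) (ε : ℕ → ℕ) : Prop :=
  ε ≠ 0 ∧ ∃ (l : ℕ∞) (ζ : ℕ → ℕ → ℕ) (nb : ℕ → ℕ × ℕ),
    (∀ i : ℕ, (i : ℕ∞) < l → IsProperStarBlock N e (ζ i) (nb i).1 (nb i).2) ∧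
    (∀ i j : ℕ, (i : ℕ∞) < l → (j : ℕ∞) < l → i ≠ j →
      Disjoint (Finset.Icc (nb i).1 (nb i).2) (Finset.Icc (nb j).1 (nb j).2)) ∧
    ∀ k, ε k = ∑' i : ℕ, if (i : ℕ∞) < l then ζ i k else 0

/-- A decomposition `ε = ζ^1 + … + ζ^l + μ` in which the `ζ^i` are proper L*-blocks whose
support intervals partition `[1, b]` and `μ` vanishes on `[0, b]` (`l, b` possibly infinite). -/
def DecompData (N : ℕ) (e : ℕ → ℕ) (ε : ℕ → ℕ) (l : ℕ∞) (ζ : ℕ → ℕ → ℕ)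
    (nb : ℕ → ℕ × ℕ) (b : ℕ∞) (μ : ℕ → ℕ) : Prop :=
  (∀ i : ℕ, (i : ℕ∞) < l → IsProperStarBlock N e (ζ i) (nb i).1 (nb i).2) ∧
  (∀ i j : ℕ, (i : ℕ∞) < l → (j : ℕ∞) < l → i ≠ j →
    Disjoint (Set.Icc (nb i).1 (nb i).2) (Set.Icc (nb j).1 (nb j).2)) ∧
  (⋃ i ∈ {i : ℕ | (i : ℕ∞) < l}, Set.Icc (nb i).1 (nb i).2) = {k : ℕ | 1 ≤ k ∧ (k : ℕ∞) ≤ b} ∧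
  (∀ k : ℕ, (k : ℕ∞) ≤ b → μ k = 0) ∧
  (∀ k, ε k = (∑' i : ℕ, if (i : ℕ∞) < l then ζ i k else 0) + μ k)

/-- Membership in `E̅*`. -/
def memEBar (N : ℕ) (e : ℕ → ℕ) (ε : ℕ → ℕ) : Prop :=
  memStar N e ε ∨
  ∃ (l : ℕ) (ζ : ℕ → ℕ → ℕ) (nb : ℕ → ℕ × ℕ) (b : ℕ),
    DecompData N e ε (l : ℕ∞) ζ nb (b : ℕ∞) (maxStarBlock N e (b + 1))

/-- Descending lexicographic order. -/
def dLT (a b : ℕ → ℕ) : Prop := ∃ k, a k < b k ∧ ∀ j, j < k → a j = b j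

def dLE (a b : ℕ → ℕ) : Prop := a = b ∨ dLT a b

/-- Ascending lexicographic order (on finitely supported functions). -/
def aLT (a b : ℕ → ℕ) : Prop := ∃ k, a k < b k ∧ ∀ j, k < j → a j = b j

/-- The basis coefficient function `β^b`. -/
def betaUnit (b : ℕ) : ℕ → ℕ := fun k => if k = b then 1 else 0

/-- The relation `η = rev̄(ε)`. -/
def RevBar (N : ℕ) (e : ℕ → ℕ) (ε η : ℕ → ℕ) : Prop :=
  (dLE (maxStarBlock N e 1) ε ∧ η = maxStarBlock N e 1) ∨
  (dLT ε (maxStarBlock N e 1) ∧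
    ((memStar N e ε ∧ η = ε) ∨
     ∃ (l : ℕ) (ζ : ℕ → ℕ → ℕ) (nb : ℕ → ℕ × ℕ) (b : ℕ) (μ : ℕ → ℕ),
       DecompData N e ε (l : ℕ∞) ζ nb (b : ℕ∞) μ ∧
       ((dLT (maxStarBlock N e (b + 1)) μ ∧
           η = fun k => (∑ i ∈ Finset.range l, ζ i k) + betaUnit b k) ∨
        (μ = maxStarBlock N e (b + 1) ∧ η = ε))))

/-- `Σ_k ε_k w^k` as a real number. -/
noncomputable def evalReal (ε : ℕ → ℕ) (w : ℝ) : ℝ := ∑' k : ℕ, (ε k : ℝ) * w ^ k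

/-- `Σ_k ε_k H_k` (finitely supported `ε`). -/
noncomputable def evalNat (ε H : ℕ → ℕ) : ℕ := ∑' k : ℕ, ε k * H k

/-- The counting function `z`. -/
noncomputable def zfun (N : ℕ) (e : ℕ → ℕ) (Ht : ℕ → ℕ) (x : ℕ) : ℕ :=
  Set.ncard {m : ℕ | m < x ∧ ∃ ε, memColl N e ε ∧ m = evalNat ε Ht}

/-- Characteristic polynomial of `L` for positive integers. -/
noncomputable def fchar (N : ℕ) (e : ℕ → ℕ) (x : ℝ) : ℝ :=
  x ^ N - (∑ k ∈ Finset.Ico 1 N, (e k : ℝ) * x ^ (N - k)) - (1 + (e N : ℝ))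

/-- Characteristic polynomial of `L` for `(0,1)`. -/
noncomputable def gchar (N : ℕ) (e : ℕ → ℕ) (x : ℝ) : ℝ :=
  -1 + (∑ k ∈ Finset.Ico 1 N, (e k : ℝ) * x ^ k) + (1 + (e N : ℝ)) * x ^ N

end Zeck

open Zeck

/-- Tuples of proper `L*`-blocks (with their support intervals) whose support intervals
partition `[1, n]`, listed in increasing order of their intervals. -/
def Zeck.decompTuples (N : ℕ) (e : ℕ → ℕ) (n : ℕ) : Set (List ((ℕ → ℕ) × ℕ × ℕ)) :=
  {l | (∀ p ∈ l, IsProperStarBlock N e p.1 p.2.1 p.2.2) ∧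
    List.Chain' (fun p q => q.2.1 = p.2.2 + 1) l ∧
    (l.head?.map (fun p => p.2.1) = some 1) ∧
    (l.getLast?.map (fun p => p.2.2) = some n)}

namespace CDR
open Zeck

/-- ncard of a pairwise disjoint finite biUnion. -/
lemma ncard_biUnion_finset {α β : Type*} (s : Finset β) (t : β → Set α)
    (hf : ∀ b ∈ s, (t b).Finite)
    (hd : ∀ b ∈ s, ∀ c ∈ s, b ≠ c → Disjoint (t b) (t c)) :
    (⋃ b ∈ s, t b).ncard = ∑ b ∈ s, (t b).ncard := by
  classical
  induction s using Finset.induction with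
  | empty => simp
  | @insert a s ha ih =>
    have hfa : (t a).Finite := hf a (Finset.mem_insert_self a s)
    have hfu : (⋃ b ∈ s, t b).Finite :=
      Set.Finite.biUnion s.finite_toSet (fun b hb => hf b (Finset.mem_insert_of_mem hb))
    have hdis : Disjoint (t a) (⋃ b ∈ s, t b) := by
      simp only [Set.disjoint_iUnion_right]
      intro i hi
      refine hd a (Finset.mem_insert_self a s) i (Finset.mem_insert_of_mem hi) ?_
      rintro rfl; exact ha hi
    rw [Finset.set_biUnion_insert, Finset.sum_insert ha,
      Set.ncard_union_eq hdis hfa hfu,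
      ih (fun b hb => hf b (Finset.mem_insert_of_mem hb))
        (fun b hb c hc hbc =>
          hd b (Finset.mem_insert_of_mem hb) c (Finset.mem_insert_of_mem hc) hbc)]

def blkFun (N : ℕ) (e : ℕ → ℕ) (a n v : ℕ) : ℕ → ℕ :=
  fun k => if k < n then maxStarBlock N e a k else if k = n then v else 0

lemma blkFun_apply_self (N : ℕ) (e : ℕ → ℕ) (a n v : ℕ) : blkFun N e a n v n = v := by
  simp [blkFun]

lemma maxStarBlock_apply (N : ℕ) (e : ℕ → ℕ) {a n : ℕ} (h : a ≤ n) :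
    maxStarBlock N e a n = e ((n - a) % N + 1) := by
  simp [maxStarBlock, h]

lemma blkFun_proper (N : ℕ) (e : ℕ → ℕ) {a n v : ℕ} (ha : 1 ≤ a) (han : a ≤ n)
    (hv : v < e ((n - a) % N + 1)) :
    IsProperStarBlock N e (blkFun N e a n v) a n := by
  refine ⟨ha, han, ?_, ?_, ?_⟩
  · intro j hj; simp [blkFun, hj]
  · rw [blkFun_apply_self, maxStarBlock_apply N e han]; exact hv
  · intro j hj
    simp [blkFun, Nat.lt_asymm hj, Nat.ne_of_gt hj]

lemma proper_eq_blkFun (N : ℕ) (e : ℕ → ℕ) {ζ : ℕ → ℕ} {a n : ℕ}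
    (h : IsProperStarBlock N e ζ a n) : ζ = blkFun N e a n (ζ n) := by
  obtain ⟨_, _, h3, _, h5⟩ := h
  funext k
  rcases lt_trichotomy k n with hk | rfl | hk
  · simp [blkFun, hk, h3 k hk]
  · simp [blkFun]
  · simp [blkFun, Nat.lt_asymm hk, Nat.ne_of_gt hk, h5 k hk]

def pre (N : ℕ) (e : ℕ → ℕ) (a : ℕ) : Set (List ((ℕ → ℕ) × ℕ × ℕ)) :=
  if a = 1 then {([] : List ((ℕ → ℕ) × ℕ × ℕ))} else decompTuples N e (a - 1)

def tset (N : ℕ) (e : ℕ → ℕ) (n a v : ℕ) : Set (List ((ℕ → ℕ) × ℕ × ℕ)) :=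
  (fun l => l ++ [(blkFun N e a n v, (a, n))]) '' pre N e a

lemma tset_last {N : ℕ} {e : ℕ → ℕ} {n a v : ℕ} {l : List ((ℕ → ℕ) × ℕ × ℕ)}
    (h : l ∈ tset N e n a v) : l.getLast? = some (blkFun N e a n v, (a, n)) := by
  obtain ⟨l', _, rfl⟩ := h
  exact List.getLast?_concat

lemma decomp_zero (N : ℕ) (e : ℕ → ℕ) : decompTuples N e 0 = ∅ := by
  ext l
  simp only [Set.mem_empty_iff_false, iff_false]
  rintro ⟨hall, _, _, hlast⟩
  rw [Option.map_eq_some_iff] at hlast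
  obtain ⟨p, hp, hp2⟩ := hlast
  have hmem : p ∈ l := by
    rcases l with _ | ⟨x, xs⟩
    · simp at hp
    · exact List.mem_of_getLast? hp
  obtain ⟨h1, h2, _⟩ := hall p hmem
  omega

lemma decomp_eq (N : ℕ) (e : ℕ → ℕ) (n : ℕ) (hn : 1 ≤ n) :
    decompTuples N e n =
      ⋃ a ∈ Finset.Icc 1 n, ⋃ v ∈ Finset.range (e ((n - a) % N + 1)), tset N e n a v := by
  ext l
  simp only [Set.mem_iUnion, Finset.mem_Icc, Finset.mem_range, exists_prop]
  constructor
  · rintro ⟨hall, hchain, hhead, hlast⟩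
    rw [Option.map_eq_some_iff] at hlast
    obtain ⟨p, hp, hp2⟩ := hlast
    have hne : l ≠ [] := by rintro rfl; simp at hp
    have hgl : l.getLast hne = p := by
      rw [List.getLast?_eq_getLast (l := l) hne] at hp; exact Option.some.inj hp
    have hsplit : l.dropLast ++ [p] = l := by
      rw [← hgl]; exact List.dropLast_append_getLast hne
    have hpl : p ∈ l := List.mem_of_getLast? hp
    have hprop := hall p hpl
    obtain ⟨ha1, hab, _, hlt, _⟩ := hprop
    rw [hp2] at hab hlt
    rw [maxStarBlock_apply N e hab] at hlt
    refine ⟨p.2.1, ⟨ha1, hab⟩, p.1 n, hlt, ?_⟩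
    · -- l ∈ tset N e n p.2.1 (p.1 n)
      have hblk : p.1 = blkFun N e p.2.1 n (p.1 n) := by
        have := proper_eq_blkFun N e (hall p hpl)
        rw [hp2] at this; exact this
      refine ⟨l.dropLast, ?_, ?_⟩
      · -- dropLast ∈ pre
        rw [← hsplit] at hchain
        rw [List.Chain', List.isChain_append] at hchain
        obtain ⟨hchain', _, hlink⟩ := hchain
        unfold pre
        rcases eq_or_ne l.dropLast [] with hdl | hdl
        · have : p.2.1 = 1 := by
            rw [← hsplit, hdl] at hhead
            simpa using hhead
          simp [this, hdl]
        · have hq : ∃ q, l.dropLast.getLast? = some q := by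
            rcases hl : l.dropLast.getLast? with _ | q
            · exact absurd (List.getLast?_eq_none_iff.mp hl) hdl
            · exact ⟨q, rfl⟩
          obtain ⟨q, hq⟩ := hq
          have hqmem : q ∈ l.dropLast := List.mem_of_getLast? hq
          have hlink' : p.2.1 = q.2.2 + 1 := hlink q hq p rfl
          have hq2 : 1 ≤ q.2.1 ∧ q.2.1 ≤ q.2.2 := by
            have := hall q ((l.dropLast_sublist).mem hqmem)
            exact ⟨this.1, this.2.1⟩
          have ha2 : p.2.1 ≠ 1 := by omega
          rw [if_neg ha2]
          refine ⟨?_, hchain', ?_, ?_⟩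
          · intro x hx; exact hall x ((l.dropLast_sublist).mem hx)
          · rw [← hsplit, List.head?_append] at hhead
            rcases hh : l.dropLast.head? with _ | x
            · exact absurd (List.head?_eq_none_iff.mp hh) hdl
            · rw [hh] at hhead; simpa using hhead
          · rw [hq]; simp; omega
      · show l.dropLast ++ [(blkFun N e p.2.1 n (p.1 n), (p.2.1, n))] = l
        rw [← hblk]
        have hpeta : (p.1, p.2.1, p.2.2) = p := rfl
        rw [hp2] at hpeta
        rw [hpeta]; exact hsplit
  · rintro ⟨a, ⟨ha1, han⟩, v, hv, l', hl', rfl⟩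
    have hproper := blkFun_proper N e ha1 han hv
    unfold pre at hl'
    rcases eq_or_ne a 1 with rfl | ha
    · rw [if_pos rfl] at hl'
      rw [Set.mem_singleton_iff] at hl'
      subst hl'
      refine ⟨?_, ?_, ?_, ?_⟩
      · intro p hp; simp at hp; subst hp; exact hproper
      · exact List.isChain_singleton _
      · simp
      · simp
    · rw [if_neg ha] at hl'
      obtain ⟨hall', hchain', hhead', hlast'⟩ := hl'
      have hne' : l' ≠ [] := by
        rintro rfl; simp at hlast'
      refine ⟨?_, ?_, ?_, ?_⟩
      · intro p hp
        rw [List.mem_append] at hp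
        rcases hp with hp | hp
        · exact hall' p hp
        · simp at hp; subst hp; exact hproper
      · rw [List.Chain', List.isChain_append]
        refine ⟨hchain', List.isChain_singleton _, ?_⟩
        intro x hx y hy
        simp only [List.head?_cons, Option.mem_def, Option.some.injEq] at hy
        subst hy
        rw [Option.map_eq_some_iff] at hlast'
        obtain ⟨q, hq, hq2⟩ := hlast'
        rw [Option.mem_def] at hx
        rw [hq] at hx
        obtain rfl : q = x := Option.some.inj hx
        simp only
        omega
      · rw [List.head?_append]
        rcases hh : l'.head? with _ | x
        · exact absurd (List.head?_eq_none_iff.mp hh) hne'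
        · rw [Option.map_eq_some_iff] at hhead' ⊢
          obtain ⟨y, hy, hy2⟩ := hhead'
          rw [hh] at hy
          exact ⟨x, rfl, by rw [Option.some.inj hy]; exact hy2⟩
      · rw [List.getLast?_concat]; simp

lemma decomp_finite (N : ℕ) (e : ℕ → ℕ) : ∀ n, (decompTuples N e n).Finite := by
  intro n
  induction n using Nat.strong_induction_on with
  | _ n ih =>
    rcases Nat.eq_zero_or_pos n with rfl | hn
    · rw [decomp_zero]; exact Set.finite_empty
    · rw [decomp_eq N e n hn]
      apply Set.Finite.biUnion (Finset.Icc 1 n).finite_toSet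
      intro a ha
      apply Set.Finite.biUnion (Finset.range _).finite_toSet
      intro v _
      apply Set.Finite.image
      unfold pre
      split
      · exact Set.finite_singleton _
      · apply ih
        rw [Finset.mem_coe, Finset.mem_Icc] at ha
        omega

lemma pre_finite (N : ℕ) (e : ℕ → ℕ) (a : ℕ) : (pre N e a).Finite := by
  unfold pre; split
  · exact Set.finite_singleton _
  · exact decomp_finite N e _

lemma tset_finite (N : ℕ) (e : ℕ → ℕ) (n a v : ℕ) : (tset N e n a v).Finite :=
  (pre_finite N e a).image _

lemma tset_ncard (N : ℕ) (e : ℕ → ℕ) (C : ℕ → ℕ) (hC0 : C 0 = 1)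
    (hC : ∀ m, 1 ≤ m → C m = Set.ncard (decompTuples N e m)) (n a v : ℕ) (ha : 1 ≤ a) :
    (tset N e n a v).ncard = C (a - 1) := by
  unfold tset
  rw [Set.ncard_image_of_injective _ (List.append_left_injective _)]
  unfold pre
  rcases eq_or_ne a 1 with rfl | h
  · simp [hC0]
  · rw [if_neg h, ← hC (a - 1) (by omega)]

lemma main_rec (N : ℕ) (e : ℕ → ℕ) (C : ℕ → ℕ) (hC0 : C 0 = 1)
    (hC : ∀ m, 1 ≤ m → C m = Set.ncard (decompTuples N e m)) (n : ℕ) (hn : 1 ≤ n) :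
    C n = ∑ a ∈ Finset.Icc 1 n, e ((n - a) % N + 1) * C (a - 1) := by
  rw [hC n hn, decomp_eq N e n hn]
  rw [ncard_biUnion_finset]
  · refine Finset.sum_congr rfl ?_
    intro a ha
    rw [Finset.mem_Icc] at ha
    rw [ncard_biUnion_finset]
    · rw [Finset.sum_congr rfl (fun v _ => tset_ncard N e C hC0 hC n a v ha.1)]
      rw [Finset.sum_const, Finset.card_range, smul_eq_mul]
    · intro v _; exact tset_finite N e n a v
    · intro v _ w _ hvw
      rw [Set.disjoint_left]
      intro l hl hl'
      apply hvw
      have h1 := tset_last hl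
      have h2 := tset_last hl'
      rw [h1] at h2
      have h3 := Option.some.inj h2
      have h4 := congrArg (fun x => x.1 n) h3
      simpa [blkFun_apply_self] using h4
  · intro a _
    exact Set.Finite.biUnion (Finset.range _).finite_toSet (fun v _ => tset_finite N e n a v)
  · intro a _ a' _ haa'
    simp only [Set.disjoint_iUnion_left, Set.disjoint_iUnion_right]
    intro v _ w _
    rw [Set.disjoint_left]
    intro l hl hl'
    apply haa'
    have h1 := tset_last hl'
    have h2 := tset_last hl
    rw [h1] at h2
    have h3 := Option.some.inj h2
    have h4 := congrArg (fun x => x.2.1) h3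
    simpa using h4.symm

lemma main_rec' (N : ℕ) (e : ℕ → ℕ) (C : ℕ → ℕ) (hC0 : C 0 = 1)
    (hC : ∀ m, 1 ≤ m → C m = Set.ncard (decompTuples N e m)) (n : ℕ) (hn : 1 ≤ n) :
    C n = ∑ j ∈ Finset.Icc 1 n, e ((j - 1) % N + 1) * C (n - j) := by
  rw [main_rec N e C hC0 hC n hn]
  refine Finset.sum_nbij' (fun a => n + 1 - a) (fun j => n + 1 - j) ?_ ?_ ?_ ?_ ?_
  · intro a ha; simp only [Finset.mem_Icc] at ha ⊢; omega
  · intro a ha; simp only [Finset.mem_Icc] at ha ⊢; omega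
  · intro a ha; simp only [Finset.mem_Icc] at ha; omega
  · intro a ha; simp only [Finset.mem_Icc] at ha; omega
  · intro a ha
    simp only [Finset.mem_Icc] at ha
    have h1 : n + 1 - a - 1 = n - a := by omega
    have h2 : n - (n + 1 - a) = a - 1 := by omega
    rw [h1, h2]

end CDR


/-- Recurrence for the number `C_n` of decompositions of `[1, n]` into proper
`L*`-blocks. -/
theorem count_decompositions_recurrence (N : ℕ) (e : ℕ → ℕ) (hN : 2 ≤ N) (he : 1 ≤ e 1)
    (C : ℕ → ℕ) (hC0 : C 0 = 1)
    (hC : ∀ n, 1 ≤ n → C n = Set.ncard (Zeck.decompTuples N e n)) :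
    (∀ k, 1 ≤ k → k ≤ N → C k = ∑ j ∈ Finset.Icc 1 k, e j * C (k - j)) ∧
    (∀ n, N + 1 ≤ n →
      C n = (∑ k ∈ Finset.Ico 1 N, e k * C (n - k)) + (1 + e N) * C (n - N)) := by
  have hIoc : ∀ m : ℕ, Finset.Ioc 0 m = Finset.Icc 1 m := by
    intro m; ext x; simp [Finset.mem_Ioc, Finset.mem_Icc]; omega
  constructor
  · intro k hk1 hkN
    rw [CDR.main_rec' N e C hC0 hC k hk1]
    refine Finset.sum_congr rfl ?_
    intro j hj
    rw [Finset.mem_Icc] at hj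
    rw [Nat.mod_eq_of_lt (by omega)]
    have hj1 : j - 1 + 1 = j := by omega
    rw [hj1]
  · intro n hn
    rw [CDR.main_rec' N e C hC0 hC n (by omega)]
    have hsplit : ∑ j ∈ Finset.Icc 1 n, e ((j - 1) % N + 1) * C (n - j)
        = ∑ j ∈ Finset.Ioc 0 N, e ((j - 1) % N + 1) * C (n - j)
          + ∑ j ∈ Finset.Ioc N n, e ((j - 1) % N + 1) * C (n - j) := by
      rw [Finset.sum_Ioc_consecutive _ (Nat.zero_le N) (by omega : N ≤ n), hIoc]
    rw [hsplit]
    have hhead : ∑ j ∈ Finset.Ioc 0 N, e ((j - 1) % N + 1) * C (n - j)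
        = (∑ k ∈ Finset.Ico 1 N, e k * C (n - k)) + e N * C (n - N) := by
      rw [hIoc, ← Finset.Ico_add_one_right_eq_Icc, Finset.sum_Ico_succ_top (by omega)]
      congr 1
      · refine Finset.sum_congr rfl ?_
        intro j hj
        rw [Finset.mem_Ico] at hj
        rw [Nat.mod_eq_of_lt (by omega)]
        have hj1 : j - 1 + 1 = j := by omega
        rw [hj1]
      · rw [Nat.mod_eq_of_lt (by omega)]
        have hN1 : N - 1 + 1 = N := by omega
        rw [hN1]
    have htail : ∑ j ∈ Finset.Ioc N n, e ((j - 1) % N + 1) * C (n - j) = C (n - N) := by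
      have h1 : ∑ j ∈ Finset.Ioc N n, e ((j - 1) % N + 1) * C (n - j)
          = ∑ j ∈ Finset.Ioc 0 (n - N), e ((j - 1) % N + 1) * C (n - N - j) := by
        refine Finset.sum_nbij' (fun j => j - N) (fun j => j + N) ?_ ?_ ?_ ?_ ?_
        · intro j hj; simp only [Finset.mem_Ioc] at hj ⊢; omega
        · intro j hj; simp only [Finset.mem_Ioc] at hj ⊢; omega
        · intro j hj; simp only [Finset.mem_Ioc] at hj; omega
        · intro j hj; simp only [Finset.mem_Ioc] at hj; omega
        · intro j hj
          simp only [Finset.mem_Ioc] at hj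
          have e1 : j - 1 = (j - N - 1) + N := by omega
          have e2 : n - j = n - N - (j - N) := by omega
          rw [e2, e1, Nat.add_mod_right]
      rw [h1, hIoc]
      exact (CDR.main_rec' N e C hC0 hC (n - N) (by omega)).symm
    rw [hhead, htail]
    ring
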